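/- arXiv:1504.04258 — 3 statements merged into one kernel-verified Lean document; each statement's English description precedes it below -/
import Mathlib

section
/- The function F(r,θ) = r − exp(−1/(1+cos θ)²)·sin²(tan(θ/2)), extended by F(r, θ) = r at θ = π + 2kπ, is continuous on ℝ⁺ × ℝ and 2π-periodic in θ. -/
open Real Topology Filter

open Classical in
noncomputable def F (r θ : ℝ) : ℝ :=
  if ∃ k : ℤ, θ = π + 2 * π * k then r
  else r - Real.exp (-(1 / (1 + Real.cos θ) ^ 2)) * Real.sin (Real.tan (θ / 2)) ^ 2

open Classical in
noncomputable def G (θ : ℝ) : ℝ :=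
  if ∃ k : ℤ, θ = π + 2 * π * k then 0
  else Real.exp (-(1 / (1 + Real.cos θ) ^ 2)) * Real.sin (Real.tan (θ / 2)) ^ 2

lemma cond_iff (θ : ℝ) : (∃ k : ℤ, θ = π + 2 * π * k) ↔ Real.cos θ = -1 := by
  rw [Real.cos_eq_neg_one_iff]
  constructor
  · rintro ⟨k, rfl⟩; exact ⟨k, by ring⟩
  · rintro ⟨k, rfl⟩; exact ⟨k, by ring⟩

lemma F_eq (r θ : ℝ) : F r θ = r - G θ := by
  unfold F G
  split <;> simp

lemma G_nonneg (θ : ℝ) : 0 ≤ G θ := by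
  unfold G
  split
  · exact le_refl 0
  · positivity

lemma half_cos_ne (θ : ℝ) (h : Real.cos θ ≠ -1) : Real.cos (θ / 2) ≠ 0 := by
  intro hc
  apply h
  have : θ = 2 * (θ / 2) := by ring
  rw [this, Real.cos_two_mul, hc]
  norm_num

lemma G_cont : Continuous G := by
  rw [continuous_iff_continuousAt]
  intro θ₀
  by_cases h : Real.cos θ₀ = -1
  · -- bad point: G → 0 = G θ₀
    have hG0 : G θ₀ = 0 := by unfold G; rw [if_pos ((cond_iff θ₀).mpr h)]
    rw [ContinuousAt, hG0]
    set S : Set ℝ := {θ | Real.cos θ = -1} with hS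
    have hunion : 𝓝 θ₀ = 𝓝[S] θ₀ ⊔ 𝓝[Sᶜ] θ₀ := by
      rw [← nhdsWithin_union, Set.union_compl_self, nhdsWithin_univ]
    rw [hunion, Filter.tendsto_sup]
    constructor
    · apply Filter.Tendsto.congr' _ tendsto_const_nhds
      filter_upwards [self_mem_nhdsWithin] with θ hθ
      unfold G
      rw [if_pos ((cond_iff θ).mpr hθ)]
    · -- within Sᶜ : squeeze between 0 and the exp bound
      have hsq : Filter.Tendsto (fun θ => (1 + Real.cos θ) ^ 2) (𝓝[Sᶜ] θ₀) (𝓝[>] 0) := by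
        rw [tendsto_nhdsWithin_iff]
        constructor
        · have hc : Continuous fun θ : ℝ => (1 + Real.cos θ) ^ 2 := by continuity
          have := hc.continuousAt (x := θ₀)
          rw [ContinuousAt] at this
          simpa [h] using this.mono_left nhdsWithin_le_nhds
        · filter_upwards [self_mem_nhdsWithin] with θ hθ
          have : Real.cos θ ≠ -1 := hθ
          have h1 : 1 + Real.cos θ ≠ 0 := fun hc => this (by linarith)
          exact pow_two_pos_of_ne_zero h1
      have hb : Filter.Tendsto (fun θ => Real.exp (-(1 / (1 + Real.cos θ) ^ 2)))
          (𝓝[Sᶜ] θ₀) (𝓝 0) := by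
        have h1 : Filter.Tendsto (fun θ => 1 / (1 + Real.cos θ) ^ 2) (𝓝[Sᶜ] θ₀)
            Filter.atTop := by
          simpa [one_div, Function.comp_def] using tendsto_inv_nhdsGT_zero.comp hsq
        exact Real.tendsto_exp_atBot.comp (Filter.tendsto_neg_atTop_atBot.comp h1)
      apply squeeze_zero' (Filter.Eventually.of_forall fun θ => G_nonneg θ) _ hb
      filter_upwards [self_mem_nhdsWithin] with θ hθ
      have hθ' : ¬ ∃ k : ℤ, θ = π + 2 * π * k := fun hk => hθ ((cond_iff θ).mp hk)
      unfold G
      rw [if_neg hθ']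
      calc Real.exp (-(1 / (1 + Real.cos θ) ^ 2)) * Real.sin (Real.tan (θ / 2)) ^ 2
          ≤ Real.exp (-(1 / (1 + Real.cos θ) ^ 2)) * 1 := by
            apply mul_le_mul_of_nonneg_left (Real.sin_sq_le_one _) (Real.exp_pos _).le
        _ = _ := mul_one _
  · -- good point
    have hopen : IsOpen {θ : ℝ | Real.cos θ ≠ -1} :=
      isOpen_compl_iff.mpr (isClosed_singleton.preimage Real.continuous_cos)
    have hmem : {θ : ℝ | Real.cos θ ≠ -1} ∈ 𝓝 θ₀ := hopen.mem_nhds h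
    have hcont : ContinuousAt (fun θ => Real.exp (-(1 / (1 + Real.cos θ) ^ 2)) *
        Real.sin (Real.tan (θ / 2)) ^ 2) θ₀ := by
      have h1 : (1 + Real.cos θ₀) ^ 2 ≠ 0 := by
        intro hc
        apply h
        have := pow_eq_zero_iff (n := 2) (by norm_num) |>.mp hc
        linarith
      have hc0 : ContinuousAt (fun θ : ℝ => (1 + Real.cos θ) ^ 2) θ₀ := by fun_prop
      have hc1 : ContinuousAt (fun θ : ℝ => -(1 / (1 + Real.cos θ) ^ 2)) θ₀ :=
        (continuousAt_const.div hc0 h1).neg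
      have hc2 : ContinuousAt (fun θ : ℝ => Real.tan (θ / 2)) θ₀ :=
        ContinuousAt.comp (g := Real.tan) (f := fun θ : ℝ => θ / 2)
          (Real.continuousAt_tan.mpr (half_cos_ne θ₀ h)) (by fun_prop)
      have hc3 : ContinuousAt (fun θ : ℝ => Real.sin (Real.tan (θ / 2))) θ₀ :=
        Real.continuous_sin.continuousAt.comp hc2
      exact hc1.rexp.mul (hc3.pow 2)
    apply hcont.congr
    filter_upwards [hmem] with θ hθ
    unfold G
    rw [if_neg (fun hk => hθ ((cond_iff θ).mp hk))]

theorem stmt_2 :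
    ContinuousOn (fun p : ℝ × ℝ => F p.1 p.2) (Set.Ici 0 ×ˢ Set.univ) ∧
    ∀ r θ : ℝ, F r (θ + 2 * π) = F r θ := by
  constructor
  · apply Continuous.continuousOn
    simp only [F_eq]
    exact continuous_fst.sub (G_cont.comp continuous_snd)
  · intro r θ
    have hiff : (∃ k : ℤ, θ + 2 * π = π + 2 * π * k) ↔ ∃ k : ℤ, θ = π + 2 * π * k := by
      rw [cond_iff, cond_iff, Real.cos_add_two_pi]
    have h2 : (θ + 2 * π) / 2 = θ / 2 + π := by ring
    simp only [F, Real.cos_add_two_pi, h2, Real.tan_add_pi]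
    by_cases hk : ∃ k : ℤ, θ = π + 2 * π * k
    · rw [if_pos (hiff.mpr hk), if_pos hk]
    · rw [if_neg (fun hc => hk (hiff.mp hc)), if_neg hk]
end

section
/- For any integer n ≥ 0 and any x₀ ≤ 0, the limit as (x,y) → (x₀,0) (with r = √(x²+y²), through points where r + x > 0) of exp(−1/r²)·exp(−(r/(r+x))²)/(r+x)ⁿ equals 0. -/
open Real Filter Topology Nat

noncomputable def rad (p : ℝ × ℝ) : ℝ := Real.sqrt (p.1 ^ 2 + p.2 ^ 2)

lemma aux_tendsto (n : ℕ) : Tendsto (fun t : ℝ => t ^ n * Real.exp (-t ^ 2)) atTop (𝓝 0) := by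
  apply squeeze_zero' (f := fun t : ℝ => t ^ n * Real.exp (-t ^ 2))
    (g := fun t : ℝ => t ^ n * Real.exp (-t))
  · filter_upwards [eventually_ge_atTop (0 : ℝ)] with t ht
    positivity
  · filter_upwards [eventually_ge_atTop (1 : ℝ)] with t ht
    have h1 : -t ^ 2 ≤ -t := by nlinarith
    have h2 : Real.exp (-t ^ 2) ≤ Real.exp (-t) := Real.exp_le_exp.2 h1
    have : (0:ℝ) ≤ t ^ n := by positivity
    exact mul_le_mul_of_nonneg_left h2 this
  · exact Real.tendsto_pow_mul_exp_neg_atTop_nhds_zero n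

lemma aux_bound (n : ℕ) (t : ℝ) (ht : 0 ≤ t) : t ^ n * Real.exp (-t ^ 2) ≤ (n ! : ℝ) := by
  have hfac : (1:ℝ) ≤ n ! := by exact_mod_cast Nat.one_le_iff_ne_zero.2 (Nat.factorial_ne_zero n)
  rcases le_or_gt t 1 with h1 | h1
  · have : t ^ n ≤ 1 := pow_le_one₀ ht h1
    have h2 : Real.exp (-t ^ 2) ≤ 1 := Real.exp_le_one_iff.2 (by nlinarith)
    nlinarith [Real.exp_pos (-t ^ 2), pow_nonneg ht n]
  · have h2 : (t ^ 2) ^ n / n ! ≤ Real.exp (t ^ 2) := Real.pow_div_factorial_le_exp _ (sq_nonneg t) n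
    have h3 : (t ^ 2) ^ n = (t ^ n) ^ 2 := by ring
    have htn : (1:ℝ) ≤ t ^ n := one_le_pow₀ h1.le
    rw [Real.exp_neg, ← div_eq_mul_inv, div_le_iff₀ (Real.exp_pos _)]
    rw [h3] at h2
    have hn : (0:ℝ) < n ! := by positivity
    have h4 : (t ^ n) ^ 2 ≤ Real.exp (t ^ 2) * n ! := (div_le_iff₀ hn).1 h2
    nlinarith [Real.exp_pos (t ^ 2)]

theorem stmt_6 (n : ℕ) (x₀ : ℝ) (hx₀ : x₀ ≤ 0) :
    Filter.Tendsto
      (fun p : ℝ × ℝ =>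
        Real.exp (-(1 / rad p ^ 2)) * Real.exp (-(rad p / (rad p + p.1)) ^ 2) /
          (rad p + p.1) ^ n)
      (nhdsWithin (x₀, 0) {p : ℝ × ℝ | p.2 ≠ 0 ∨ 0 < p.1})
      (nhds 0) := by
  set S := {p : ℝ × ℝ | p.2 ≠ 0 ∨ 0 < p.1} with hS
  set L := nhdsWithin ((x₀ : ℝ), (0:ℝ)) S with hL
  set A := fun p : ℝ × ℝ => Real.exp (-(1 / rad p ^ 2)) / rad p ^ n with hA_def
  set B := fun p : ℝ × ℝ =>
    (rad p / (rad p + p.1)) ^ n * Real.exp (-(rad p / (rad p + p.1)) ^ 2) with hB_def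
  have habs : ∀ p : ℝ × ℝ, |p.1| ≤ rad p := by
    intro p
    rw [rad, ← Real.sqrt_sq_eq_abs]
    exact Real.sqrt_le_sqrt (by nlinarith [sq_nonneg p.2])
  have hpos : ∀ p ∈ S, 0 < rad p + p.1 := by
    rintro ⟨x, y⟩ (hy | hx)
    · have hxy : x ^ 2 < x ^ 2 + y ^ 2 := by nlinarith [sq_nonneg y, pow_ne_zero 2 hy, sq_abs y, abs_pos.2 hy]
      have : |x| < rad (x, y) := by
        rw [rad, ← Real.sqrt_sq_eq_abs]
        exact Real.sqrt_lt_sqrt (sq_nonneg x) hxy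
      have := neg_abs_le x
      simp only at *
      linarith
    · have : 0 ≤ rad (x, y) := Real.sqrt_nonneg _
      simp only at *
      linarith
  have hradpos : ∀ p ∈ S, 0 < rad p := by
    intro p hp
    have h1 := hpos p hp
    have h2 := habs p
    have h3 := le_abs_self p.1
    linarith
  have hrad_cont : Continuous rad := by
    unfold rad; fun_prop
  have hrad0 : rad (x₀, 0) = -x₀ := by
    rw [rad]
    simp only
    rw [show x₀ ^ 2 + (0:ℝ) ^ 2 = x₀ ^ 2 by ring, Real.sqrt_sq_eq_abs, abs_of_nonpos hx₀]
  have hmemS : ∀ᶠ p in L, p ∈ S := eventually_mem_nhdsWithin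
  have hradT : Tendsto rad L (𝓝 (-x₀)) := by
    have := hrad_cont.tendsto (x₀, (0:ℝ))
    rw [hrad0] at this
    exact this.mono_left nhdsWithin_le_nhds
  have h_eq : ∀ p ∈ S, Real.exp (-(1 / rad p ^ 2)) * Real.exp (-(rad p / (rad p + p.1)) ^ 2) /
      (rad p + p.1) ^ n = A p * B p := by
    intro p hp
    have h1 : rad p ≠ 0 := (hradpos p hp).ne'
    have h2 : rad p + p.1 ≠ 0 := (hpos p hp).ne'
    simp only [hA_def, hB_def, div_pow]
    field_simp
  have hRX : Tendsto (fun p => rad p + p.1) L (𝓝[>] 0) := by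
    rw [tendsto_nhdsWithin_iff]
    constructor
    · have h1 : Tendsto (fun p : ℝ × ℝ => p.1) L (𝓝 x₀) :=
        (continuous_fst.tendsto _).mono_left nhdsWithin_le_nhds
      have := hradT.add h1
      simpa using this
    · exact hmemS.mono fun p hp => hpos p hp
  rcases eq_or_lt_of_le hx₀ with h0 | hneg
  · -- x₀ = 0
    subst h0
    have hrt : Tendsto rad L (𝓝[>] 0) := by
      rw [tendsto_nhdsWithin_iff]
      refine ⟨by simpa using hradT, hmemS.mono fun p hp => hradpos p hp⟩
    have hInv : Tendsto (fun p => (rad p)⁻¹) L atTop := tendsto_inv_nhdsGT_zero.comp hrt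
    have hA : Tendsto A L (𝓝 0) := by
      have h := (aux_tendsto n).comp hInv
      refine h.congr fun p => ?_
      simp only [Function.comp_apply, hA_def]
      rw [inv_pow, inv_pow, one_div, div_eq_mul_inv, mul_comm]
    apply squeeze_zero' (g := fun p => A p * (n ! : ℝ))
    · filter_upwards [hmemS] with p hp
      exact div_nonneg (by positivity) (pow_nonneg (hpos p hp).le n)
    · filter_upwards [hmemS] with p hp
      rw [h_eq p hp]
      have hAnn : 0 ≤ A p :=
        div_nonneg (Real.exp_pos _).le (pow_nonneg (Real.sqrt_nonneg _) n)
      have hBb : B p ≤ (n ! : ℝ) :=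
        aux_bound n _ (div_nonneg (hradpos p hp).le (hpos p hp).le)
      exact mul_le_mul_of_nonneg_left hBb hAnn
    · have h := hA.mul_const (n ! : ℝ)
      rw [zero_mul] at h
      exact h
  · -- x₀ < 0
    have hT : Tendsto (fun p => rad p / (rad p + p.1)) L atTop := by
      have h1 : Tendsto (fun p => (rad p + p.1)⁻¹) L atTop := tendsto_inv_nhdsGT_zero.comp hRX
      have := Filter.Tendsto.pos_mul_atTop (show (0:ℝ) < -x₀ by linarith) hradT h1
      simpa [div_eq_mul_inv] using this
    have hB : Tendsto B L (𝓝 0) := by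
      have := (aux_tendsto n).comp hT
      simpa [hB_def, Function.comp_def] using this
    have hxne : (-x₀ : ℝ) ≠ 0 := by linarith
    have hA : Tendsto A L (𝓝 (Real.exp (-(1 / (-x₀) ^ 2)) / (-x₀) ^ n)) := by
      have h1 : Tendsto (fun p => -(1 / rad p ^ 2)) L (𝓝 (-(1 / (-x₀) ^ 2))) := by
        apply Tendsto.neg
        exact tendsto_const_nhds.div (hradT.pow 2) (pow_ne_zero 2 hxne)
      exact (Real.continuous_exp.tendsto _ |>.comp h1).div (hradT.pow n) (pow_ne_zero n hxne)
    have hprod : Tendsto (fun p => A p * B p) L (𝓝 0) := by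
      simpa using hA.mul hB
    exact Tendsto.congr' (hmemS.mono fun p hp => (h_eq p hp).symm) hprod
end

section
/- Let g : ℝ → ℝ be continuous, 2π-periodic, nonnegative, and let Ω = {(g(θ)cos θ, g(θ)sin θ) : θ ∈ ℝ} ⊆ ℝ². If a curve (r(t), θ(t)) in polar coordinates satisfies r(t) − g(θ(t)) → 0 as t → ∞, θ(t) → ∞, and r(t) is bounded, then every point of Ω is a limit point of the curve, i.e., Ω is contained in the ω-limit set of the curve. -/
open Real Filter

theorem stmt_16 (g : ℝ → ℝ) (hg : Continuous g) (hper : ∀ x, g (x + 2 * π) = g x)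
    (hnn : ∀ x, 0 ≤ g x)
    (Ω : Set (ℝ × ℝ)) (hΩ : Ω = {p : ℝ × ℝ | ∃ x : ℝ, p = (g x * cos x, g x * sin x)})
    (r θ : ℝ → ℝ) (hrc : Continuous r) (hθc : Continuous θ)
    (hF : Tendsto (fun t => r t - g (θ t)) atTop (nhds 0))
    (hthInf : Tendsto θ atTop atTop)
    (hbd : ∃ M : ℝ, ∀ t, |r t| ≤ M) :
    ∀ p ∈ Ω, MapClusterPt p atTop (fun t => (r t * cos (θ t), r t * sin (θ t))) := by
  subst hΩ
  rintro p ⟨x, rfl⟩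
  have hperP : Function.Periodic g (2 * π) := hper
  rw [mapClusterPt_iff_frequently]
  intro s hs
  rcases Metric.mem_nhds_iff.1 hs with ⟨ε, hε, hball⟩
  rw [frequently_atTop]
  intro T
  have h1 : ∀ᶠ t in atTop, |r t - g (θ t)| < ε := by
    have := (Metric.tendsto_nhds.1 hF) ε hε
    simpa [Real.dist_eq] using this
  rcases eventually_atTop.1 h1 with ⟨T₁, hT₁⟩
  set T₂ := max T T₁ with hT₂def
  obtain ⟨n, hn⟩ := exists_nat_gt ((θ T₂ - x) / (2 * π))
  have h2π : (0:ℝ) < 2 * π := by positivity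
  have htarget : θ T₂ ≤ x + n * (2 * π) := by
    have := (div_lt_iff₀ h2π).1 hn
    linarith
  obtain ⟨T₃, hT₃⟩ := eventually_atTop.1 (hthInf.eventually_ge_atTop (x + n * (2 * π)))
  set s' := max T₂ T₃ with hs'def
  have hs'1 : x + n * (2 * π) ≤ θ s' := hT₃ s' (le_max_right _ _)
  have hsub := intermediate_value_Icc (le_max_left T₂ T₃) hθc.continuousOn
  obtain ⟨t, ht, hθt⟩ := hsub ⟨htarget, hs'1⟩
  refine ⟨t, le_trans (le_max_left _ _) ht.1, hball ?_⟩
  have hterr : |r t - g (θ t)| < ε := hT₁ t (le_trans (le_max_right _ _) ht.1)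
  have hgθ : g (θ t) = g x := by
    rw [hθt]
    simpa using hperP.nat_mul n x
  have hcos : cos (θ t) = cos x := by rw [hθt]; exact Real.cos_add_nat_mul_two_pi x n
  have hsin : sin (θ t) = sin x := by rw [hθt]; exact Real.sin_add_nat_mul_two_pi x n
  have herr : |r t - g x| < ε := by rwa [hgθ] at hterr
  simp only [Metric.mem_ball]
  rw [Prod.dist_eq]
  have hb1 : dist (r t * cos (θ t)) (g x * cos x) < ε := by
    rw [hcos, Real.dist_eq]
    calc |r t * cos x - g x * cos x| = |r t - g x| * |cos x| := by
          rw [← abs_mul]; ring_nf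
      _ ≤ |r t - g x| * 1 := by
          exact mul_le_mul_of_nonneg_left (abs_cos_le_one x) (abs_nonneg _)
      _ < ε := by rwa [mul_one]
  have hb2 : dist (r t * sin (θ t)) (g x * sin x) < ε := by
    rw [hsin, Real.dist_eq]
    calc |r t * sin x - g x * sin x| = |r t - g x| * |sin x| := by
          rw [← abs_mul]; ring_nf
      _ ≤ |r t - g x| * 1 := by
          exact mul_le_mul_of_nonneg_left (abs_sin_le_one x) (abs_nonneg _)
      _ < ε := by rwa [mul_one]
  exact max_lt hb1 hb2
end
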